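/- For F = x + 1/y + x/y in GF(2)[x,x^{-1},y,y^{-1}], |F^n| = 3^{s(n)} for all n ≥ 0, where s(n) is the number of 1s in the binary expansion of n. -/

import Mathlib

abbrev R2 := AddMonoidAlgebra (ZMod 2) (ℤ × ℤ)

noncomputable def mon (i j : ℤ) : R2 := AddMonoidAlgebra.single (i, j) 1

namespace OR013

open Finsupp

def D : ℤ × ℤ → ℤ × ℤ := fun p => (2 * p.1, 2 * p.2)

lemma D_inj : Function.Injective D := by
  intro a b h
  simp only [D, Prod.mk.injEq] at h
  rw [Prod.ext_iff]; omega

lemma two_eq_zero : (2 : R2) = 0 := by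
  have h2 : (2 : R2) = 1 + 1 := by norm_num
  have h1 : (1 : R2) = AddMonoidAlgebra.single 0 1 := rfl
  rw [h2, h1, ← AddMonoidAlgebra.single_add]
  have : (1 + 1 : ZMod 2) = 0 := by decide
  rw [this]
  simp

lemma sq_eq (f : R2) : (f ^ 2).coeff = Finsupp.mapDomain D f.coeff := by
  induction f using AddMonoidAlgebra.induction with
  | zero => simp
  | single_add a b f ha hb ih =>
      have hb2 : b * b = b := by revert b; decide
      have hDa : a + a = D a := by
        rw [Prod.ext_iff]
        constructor <;> simp [D, two_mul]
      rw [add_sq, two_eq_zero, zero_mul, zero_mul, add_zero, AddMonoidAlgebra.coeff_add, ih,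
        AddMonoidAlgebra.coeff_add, Finsupp.mapDomain_add, AddMonoidAlgebra.coeff_single,
        Finsupp.mapDomain_single, sq,
        AddMonoidAlgebra.single_mul_single, hb2, hDa, AddMonoidAlgebra.coeff_single]

lemma shift_mul (a : ℤ × ℤ) (f : R2) :
    (AddMonoidAlgebra.single a 1 * f).coeff = Finsupp.mapDomain (fun z => a + z) f.coeff := by
  induction f using AddMonoidAlgebra.induction with
  | zero => simp
  | single_add c d f hc hd ih =>
      rw [mul_add, AddMonoidAlgebra.coeff_add, ih, AddMonoidAlgebra.coeff_add,
        Finsupp.mapDomain_add, AddMonoidAlgebra.coeff_single, Finsupp.mapDomain_single,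
        AddMonoidAlgebra.single_mul_single, one_mul, AddMonoidAlgebra.coeff_single]

lemma shift_inj (a : ℤ × ℤ) : Function.Injective (fun z : ℤ × ℤ => a + z) :=
  fun _ _ h => by simpa using h

lemma shift_support (a : ℤ × ℤ) (f : R2) :
    (AddMonoidAlgebra.single a 1 * f).coeff.support = f.coeff.support.image (fun z => a + z) := by
  rw [shift_mul, Finsupp.mapDomain_support_of_injective (shift_inj a)]

lemma disj (a b : ℤ × ℤ) (h : a.1 % 2 ≠ b.1 % 2 ∨ a.2 % 2 ≠ b.2 % 2)
    (s : Finset (ℤ × ℤ)) (hs : ∀ z ∈ s, ∃ w, z = D w) :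
    Disjoint (s.image (fun z => a + z)) (s.image (fun z => b + z)) := by
  rw [Finset.disjoint_left]
  rintro z hz1 hz2
  simp only [Finset.mem_image] at hz1 hz2
  obtain ⟨u, hu, rfl⟩ := hz1
  obtain ⟨v, hv, heq⟩ := hz2
  obtain ⟨w, rfl⟩ := hs u hu
  obtain ⟨w', rfl⟩ := hs v hv
  rw [Prod.ext_iff] at heq
  simp only [D, Prod.fst_add, Prod.snd_add] at heq
  omega

end OR013

open OR013 Finsupp in
theorem oddRule013_all (n : ℕ) :
    ((mon 1 0 + mon 0 (-1) + mon 1 (-1)) ^ n).coeff.support.card = 3 ^ (Nat.digits 2 n).sum := by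
  induction n using Nat.strong_induction_on with
  | _ n ih =>
  set F : R2 := mon 1 0 + mon 0 (-1) + mon 1 (-1) with hF
  rcases Nat.eq_zero_or_pos n with rfl | hpos
  · have h1 : (1 : R2) = AddMonoidAlgebra.single 0 1 := rfl
    simp [h1, AddMonoidAlgebra.coeff_single, Finsupp.support_single_ne_zero]
  · set m := n / 2 with hm
    have hmn : m < n := Nat.div_lt_self hpos one_lt_two
    have hdig : (Nat.digits 2 n).sum = n % 2 + (Nat.digits 2 m).sum := by
      rw [Nat.digits_def' (by norm_num) hpos]; simp [hm]
    have hsq : (F ^ (2 * m)).coeff = Finsupp.mapDomain D (F ^ m).coeff := by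
      rw [mul_comm, pow_mul, sq_eq]
    have hcard2 : (F ^ (2 * m)).coeff.support.card = 3 ^ (Nat.digits 2 m).sum := by
      rw [hsq, Finsupp.mapDomain_support_of_injective D_inj,
        Finset.card_image_of_injective _ D_inj, ih m hmn]
    have hsupp : ∀ z ∈ (F ^ (2 * m)).coeff.support, ∃ w, z = D w := by
      intro z hz
      rw [hsq, Finsupp.mapDomain_support_of_injective D_inj] at hz
      simp only [Finset.mem_image] at hz
      obtain ⟨w, _, rfl⟩ := hz
      exact ⟨w, rfl⟩
    rcases Nat.mod_two_eq_zero_or_one n with he | ho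
    · have hn : n = 2 * m := by omega
      rw [hdig, he, zero_add, ← hcard2, hn]
    · have hn : n = 2 * m + 1 := by omega
      set g : R2 := F ^ (2 * m) with hg
      have d12 := disj (1, 0) (0, -1) (by norm_num) g.coeff.support hsupp
      have d13 := disj (1, 0) (1, -1) (by norm_num) g.coeff.support hsupp
      have d23 := disj (0, -1) (1, -1) (by norm_num) g.coeff.support hsupp
      have hFn : F ^ n = AddMonoidAlgebra.single ((1 : ℤ), (0 : ℤ)) 1 * g +
          AddMonoidAlgebra.single ((0 : ℤ), (-1 : ℤ)) 1 * g +
          AddMonoidAlgebra.single ((1 : ℤ), (-1 : ℤ)) 1 * g := by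
        rw [hn, pow_succ, ← hg, mul_comm, hF, add_mul, add_mul]
        rfl
      have hd12' : Disjoint (AddMonoidAlgebra.single ((1 : ℤ), (0 : ℤ)) 1 * g).coeff.support
          (AddMonoidAlgebra.single ((0 : ℤ), (-1 : ℤ)) 1 * g).coeff.support := by
        rw [shift_support, shift_support]; exact d12
      have hsup : (F ^ n).coeff.support =
          g.coeff.support.image (fun z => (1, 0) + z) ∪ g.coeff.support.image (fun z => (0, -1) + z)
            ∪ g.coeff.support.image (fun z => (1, -1) + z) := by
        rw [hFn, AddMonoidAlgebra.coeff_add, AddMonoidAlgebra.coeff_add, Finsupp.support_add_eq, Finsupp.support_add_eq hd12',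
          shift_support, shift_support, shift_support]
        rw [Finsupp.support_add_eq hd12', shift_support, shift_support, shift_support,
          Finset.disjoint_union_left]
        exact ⟨d13, d23⟩
      rw [hsup, Finset.card_union_of_disjoint, Finset.card_union_of_disjoint d12]
      · simp only [Finset.card_image_of_injective _ (shift_inj _)]
        rw [hcard2, hdig, ho]
        ring
      · rw [Finset.disjoint_union_left]
        exact ⟨d13, d23⟩
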